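/- Assume that for some (equivalently, by W-equivariance, for every) basis Δ of Φ the highest weights λ₀^ρ(Δ) and λ₀^σ(Δ) lie in the same face of the decomposition of A* determined by the hyperplanes H_a = {z ∈ A* : (a, z) = 0}, a ∈ Φ; equivalently, for every a ∈ Δ one has (λ₀^ρ(Δ), a) > 0 iff (λ₀^σ(Δ), a) > 0. Then for all bases Δ, Δ' of Φ and all subsets Y ⊆ Δ, Y' ⊆ Δ' which are admissible (the notions of admissibility for ρ and σ coincide under this hypothesis), one has F_Y^Δ(ρ) = F_{Y'}^{Δ'}(ρ) if and only if F_Y^Δ(σ) = F_{Y'}^{Δ'}(σ). -/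

import Mathlib

/-!
Common setup for Werner, "Compactifications of Bruhat-Tits buildings associated to
linear representations":  a finite-dimensional real vector space `A` (the apartment),
a root system `Φ` in the dual space together with a Weyl-group invariant inner
product, a finite Weyl-invariant set `Λ` of (K-)weights, and for every basis `Δ`
of `Φ` a highest weight `lam0 Δ ∈ Λ`.
-/

open Pointwise Filter Topology Bornology
open scoped Classical

noncomputable section

/-- A set `M` of linear forms is *connected* if the graph with vertex set `M` and an
edge between `m` and `n` iff `inn m n ≠ 0` is connected. -/
def GraphConnected {D : Type*} (inn : D → D → ℝ) (M : Set D) : Prop :=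
  ∀ m ∈ M, ∀ n ∈ M,
    Relation.ReflTransGen (fun x y => x ∈ M ∧ y ∈ M ∧ inn x y ≠ 0) m n

/-- The coefficients of `μ` as a linear combination of the elements of `Δ` (chosen
arbitrarily if one exists; it is unique when `Δ` is linearly independent). -/
noncomputable def coeffs {A : Type*} [AddCommGroup A] [Module ℝ A]
    (Δ : Finset (Module.Dual ℝ A)) (μ : Module.Dual ℝ A) : Module.Dual ℝ A → ℝ :=
  if h : ∃ n : Module.Dual ℝ A → ℝ, μ = ∑ b ∈ Δ, n b • b then h.choose else fun _ => 0

/-- The support `[μ]` of `μ` with respect to the basis `Δ`: the set of elements of `Δ`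
whose coefficient in `μ` is nonzero. -/
noncomputable def supp {A : Type*} [AddCommGroup A] [Module ℝ A]
    (Δ : Finset (Module.Dual ℝ A)) (μ : Module.Dual ℝ A) : Finset (Module.Dual ℝ A) :=
  Δ.filter fun a => coeffs Δ μ a ≠ 0

/-- Raw data: a finite set `Φ` of roots in the dual of `A`, a product `inn` on the dual,
a finite set `Λ` of weights, and a highest weight `lam0 Δ` for every basis `Δ`. -/
structure RootWeightData (A : Type*) [NormedAddCommGroup A] [NormedSpace ℝ A]
    [FiniteDimensional ℝ A] where
  Φ : Finset (Module.Dual ℝ A)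
  inn : Module.Dual ℝ A → Module.Dual ℝ A → ℝ
  Λ : Finset (Module.Dual ℝ A)
  lam0 : Finset (Module.Dual ℝ A) → Module.Dual ℝ A

namespace RootWeightData

variable {A : Type*} [NormedAddCommGroup A] [NormedSpace ℝ A] [FiniteDimensional ℝ A]
variable (S : RootWeightData A)

/-- The reflection associated to the root `a`. -/
def refl (a : Module.Dual ℝ A) : Function.End (Module.Dual ℝ A) :=
  fun x => x - (2 * S.inn x a / S.inn a a) • a

/-- The Weyl group `W`, generated by the reflections in the roots. -/
def weyl : Submonoid (Function.End (Module.Dual ℝ A)) :=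
  Submonoid.closure {f | ∃ a ∈ S.Φ, f = S.refl a}

/-- `Δ` is a basis of the root system `Φ`: a linearly independent subset of `Φ` such
that every root is a nonnegative or nonpositive linear combination of `Δ`. -/
def IsBase (Δ : Finset (Module.Dual ℝ A)) : Prop :=
  (↑Δ : Set (Module.Dual ℝ A)) ⊆ (S.Φ : Set (Module.Dual ℝ A)) ∧
  LinearIndependent ℝ (fun a : (Δ : Set (Module.Dual ℝ A)) => (a : Module.Dual ℝ A)) ∧
  ∀ a ∈ S.Φ,
    (∃ n : Module.Dual ℝ A → ℝ, (∀ b ∈ Δ, 0 ≤ n b) ∧ a = ∑ b ∈ Δ, n b • b) ∨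
    (∃ n : Module.Dual ℝ A → ℝ, (∀ b ∈ Δ, 0 ≤ n b) ∧ a = -∑ b ∈ Δ, n b • b)

/-- `Y` is an admissible subset of the basis `Δ`: `Y ⊆ Δ` and `Y ∪ {λ₀(Δ)}` is
connected. -/
def Admissible (Δ Y : Finset (Module.Dual ℝ A)) : Prop :=
  Y ⊆ Δ ∧ GraphConnected S.inn ((↑Y : Set (Module.Dual ℝ A)) ∪ {S.lam0 Δ})

end RootWeightData

/-- The whole setting of Werner's paper: the data of `RootWeightData`, where `Φ` is a
(crystallographic, possibly non-reduced) root system spanning the dual of `A`, `inn` is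
a Weyl-invariant inner product, `Λ` is a finite Weyl-invariant set of weights, and
`lam0` picks, Weyl-equivariantly, a highest weight for each basis, dominating all of
`Λ`; moreover a subset of a basis is admissible iff it is the support of
`λ₀(Δ) - λ` for some weight `λ`. -/
structure RootWeightSystem (A : Type*) [NormedAddCommGroup A] [NormedSpace ℝ A]
    [FiniteDimensional ℝ A] extends RootWeightData A where
  inn_symm : ∀ x y, inn x y = inn y x
  inn_add_left : ∀ x y z, inn (x + y) z = inn x z + inn y z
  inn_smul_left : ∀ (c : ℝ) (x y), inn (c • x) y = c * inn x y
  inn_pos : ∀ x, x ≠ 0 → 0 < inn x x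
  root_ne_zero : ∀ a ∈ Φ, a ≠ (0 : Module.Dual ℝ A)
  neg_mem : ∀ a ∈ Φ, -a ∈ Φ
  refl_mem : ∀ a ∈ Φ, ∀ b ∈ Φ, toRootWeightData.refl a b ∈ Φ
  inn_weyl_invariant :
    ∀ w ∈ toRootWeightData.weyl, ∀ x y, inn (w x) (w y) = inn x y
  phi_spans : Submodule.span ℝ (Φ : Set (Module.Dual ℝ A)) = ⊤
  exists_base : ∃ Δ, toRootWeightData.IsBase Δ
  base_cover : ∀ x : A, ∃ Δ, toRootWeightData.IsBase Δ ∧ ∀ a ∈ Δ, 0 ≤ a x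
  base_weyl : ∀ w ∈ toRootWeightData.weyl, ∀ Δ, toRootWeightData.IsBase Δ →
    toRootWeightData.IsBase (Δ.image (w : Module.Dual ℝ A → Module.Dual ℝ A))
  lam0_mem : ∀ Δ, toRootWeightData.IsBase Δ → lam0 Δ ∈ Λ
  lam0_dominates : ∀ Δ, toRootWeightData.IsBase Δ → ∀ l ∈ Λ,
    ∃ n : Module.Dual ℝ A → ℝ, (∀ a ∈ Δ, 0 ≤ n a) ∧ lam0 Δ - l = ∑ a ∈ Δ, n a • a
  weight_weyl_invariant : ∀ w ∈ toRootWeightData.weyl, ∀ l ∈ Λ, w l ∈ Λ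
  lam0_equivariant : ∀ w ∈ toRootWeightData.weyl, ∀ Δ, toRootWeightData.IsBase Δ →
    lam0 (Δ.image (w : Module.Dual ℝ A → Module.Dual ℝ A)) = w (lam0 Δ)
  integrality : ∀ l ∈ Λ, ∀ a ∈ Φ, ∃ k : ℤ, 2 * inn l a / inn a a = (k : ℝ)
  admissible_iff_support : ∀ Δ, toRootWeightData.IsBase Δ → ∀ Y ⊆ Δ,
    (toRootWeightData.Admissible Δ Y ↔ ∃ l ∈ Λ, supp Δ (lam0 Δ - l) = Y)

namespace RootWeightSystem

variable {A : Type*} [NormedAddCommGroup A] [NormedSpace ℝ A] [FiniteDimensional ℝ A]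
variable (S : RootWeightSystem A)

/-- The face `F_Y^Δ` of the apartment `A` associated to a basis `Δ` and an admissible
subset `Y ⊆ Δ`. -/
def Face (Δ Y : Finset (Module.Dual ℝ A)) : Set A :=
  {x | (∀ a ∈ Y, a x = 0) ∧
    ∀ l ∈ S.Λ, ¬ supp Δ (S.lam0 Δ - l) ⊆ Y → 0 < (S.lam0 Δ - l) x}

/-- `F` belongs to the collection `Σ` of faces. -/
def IsFace (F : Set A) : Prop :=
  ∃ Δ Y, S.toRootWeightData.IsBase Δ ∧ S.toRootWeightData.Admissible Δ Y ∧
    F = S.Face Δ Y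

/-- The collection `Σ` of all faces. -/
def Faces : Type _ := {F : Set A // S.IsFace F}

/-- The relation identifying `(F, u)` and `(F, v)` when `u - v ∈ ⟨F⟩`; the quotient is
the disjoint union `Ā = ⊔_{F ∈ Σ} A/⟨F⟩`. -/
def AbarRel (p q : S.Faces × A) : Prop :=
  p.1 = q.1 ∧ p.2 - q.2 ∈ Submodule.span ℝ p.1.val

/-- The compactified apartment `Ā = ⊔_{F ∈ Σ} A_F`, `A_F = A/⟨F⟩`. -/
def Abar : Type _ := Quot S.AbarRel

/-- `r_F(u)`, the image of `u ∈ A` in the stratum `A_F` of `Ā`. -/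
def mkAbar (F : S.Faces) (u : A) : S.Abar := Quot.mk _ (F, u)

/-- The basic set `Γ_F(U) = ⋃_{F' ⊆ cl F} r_{F'}(U + F)` of `Ā`. -/
def Gamma (F : S.Faces) (U : Set A) : Set S.Abar :=
  {p | ∃ F' : S.Faces, F'.val ⊆ closure F.val ∧ ∃ u ∈ U + F.val, p = S.mkAbar F' u}

/-- The topology of `Ā`, generated by the sets `Γ_F(U)` for `F ∈ Σ` and `U ⊆ A`
bounded and open. -/
instance : TopologicalSpace S.Abar :=
  TopologicalSpace.generateFrom
    {V : Set S.Abar | ∃ (F : S.Faces) (U : Set A),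
      IsOpen U ∧ IsBounded U ∧ V = S.Gamma F U}

/-- `f_Ω(a) = inf {t : Ω ⊆ cl_Ā {z ∈ A : a(z) ≥ -t}} ∈ ℝ ∪ {±∞}`, where `A` is embedded
in `Ā` as the stratum of the face `F₀ = {0}`. -/
def fOmega (F₀ : S.Faces) (Ω : Set S.Abar) (a : Module.Dual ℝ A) : EReal :=
  sInf ((fun t : ℝ => (t : EReal)) ''
    {t : ℝ | Ω ⊆ closure (S.mkAbar F₀ '' {z : A | -t ≤ a z})})

end RootWeightSystem


variable {A : Type*} [NormedAddCommGroup A] [NormedSpace ℝ A] [FiniteDimensional ℝ A]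

section AuxLemmas
set_option linter.unusedSectionVars false

variable {A : Type*} [NormedAddCommGroup A] [NormedSpace ℝ A] [FiniteDimensional ℝ A]

local notation "D" => Module.Dual ℝ A

lemma sum_eq_zero_coeffs {Δ : Finset D}
    (hli : LinearIndependent ℝ (fun a : (Δ : Set D) => (a : D)))
    {p : D → ℝ}
    (h : ∑ b ∈ Δ, p b • b = 0) : ∀ b ∈ Δ, p b = 0 := by
  intro b hb
  have h1 : ∑ i ∈ Δ.attach, p (i : D) • (i : D) = 0 := by
    rw [Finset.sum_attach Δ (fun b => p b • b)]; exact h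
  exact linearIndependent_iff'.mp hli Δ.attach (fun i => p (i : D)) h1 ⟨b, hb⟩
    (Finset.mem_attach _ _)

lemma rep_unique {Δ : Finset D}
    (hli : LinearIndependent ℝ (fun a : (Δ : Set D) => (a : D)))
    {p q : D → ℝ}
    (h : ∑ b ∈ Δ, p b • b = ∑ b ∈ Δ, q b • b) : ∀ b ∈ Δ, p b = q b := by
  intro b hb
  have h0 : ∑ b ∈ Δ, (p b - q b) • b = 0 := by
    calc ∑ b ∈ Δ, (p b - q b) • b = ∑ b ∈ Δ, (p b • b - q b • b) :=
          Finset.sum_congr rfl (fun b _ => sub_smul (p b) (q b) b)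
      _ = 0 := by rw [Finset.sum_sub_distrib, h, sub_self]
  have := sum_eq_zero_coeffs hli h0 b hb
  linarith

lemma coeffs_spec {Δ : Finset D} {μ : D}
    (h : ∃ n : D → ℝ, μ = ∑ b ∈ Δ, n b • b) :
    μ = ∑ b ∈ Δ, coeffs Δ μ b • b := by
  rw [coeffs, dif_pos h]; exact h.choose_spec

lemma coeffs_eq {Δ : Finset D}
    (hli : LinearIndependent ℝ (fun a : (Δ : Set D) => (a : D)))
    {μ : D} {n : D → ℝ} (h : μ = ∑ b ∈ Δ, n b • b) :
    ∀ b ∈ Δ, coeffs Δ μ b = n b := by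
  have h2 := coeffs_spec (Δ := Δ) ⟨n, h⟩
  exact rep_unique hli (h2.symm.trans h)

lemma mem_span_of_supp_subset {Δ Y : Finset D} {μ : D}
    (h : ∃ n : D → ℝ, μ = ∑ b ∈ Δ, n b • b) (hsub : supp Δ μ ⊆ Y) :
    μ ∈ Submodule.span ℝ (Y : Set D) := by
  have h2 := coeffs_spec h
  have h3 : ∑ b ∈ supp Δ μ, coeffs Δ μ b • b = μ := by
    rw [supp]
    exact (Finset.sum_filter_of_ne (p := fun a => coeffs Δ μ a ≠ 0)
      (fun b _ hfb => fun hc => hfb (by rw [hc, zero_smul]))).trans h2.symm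
  rw [← h3]
  exact Submodule.sum_mem _ (fun b hb => Submodule.smul_mem _ _
    (Submodule.subset_span (by exact_mod_cast hsub hb)))

lemma supp_subset_of_mem_span {Δ Y : Finset D}
    (hli : LinearIndependent ℝ (fun a : (Δ : Set D) => (a : D)))
    (hYΔ : Y ⊆ Δ) {μ : D} (hμ : μ ∈ Submodule.span ℝ (Y : Set D)) :
    supp Δ μ ⊆ Y := by
  obtain ⟨f, -, hf⟩ := Submodule.mem_span_finset.mp hμ
  set n : D → ℝ := fun b => if b ∈ Y then f b else 0 with hn
  have hrep : μ = ∑ b ∈ Δ, n b • b := by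
    rw [← hf,
      ← Finset.sum_subset hYΔ (fun b _ hb => by simp only [hn]; rw [if_neg hb, zero_smul])]
    exact Finset.sum_congr rfl (fun b hb => by simp only [hn]; rw [if_pos hb])
  intro b hb
  rw [supp, Finset.mem_filter] at hb
  have := coeffs_eq hli hrep b hb.1
  by_contra hbY
  exact hb.2 (by rw [this, hn]; simp [if_neg hbY])

lemma eval_zero_of_mem_span {Y : Finset D} {x : A} (hx : ∀ a ∈ Y, a x = 0)
    {μ : D} (hμ : μ ∈ Submodule.span ℝ (Y : Set D)) : μ x = 0 := by
  have hle : Submodule.span ℝ (Y : Set D) ≤ LinearMap.ker (Module.Dual.eval ℝ A x) := by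
    rw [Submodule.span_le]
    intro v hv
    rw [SetLike.mem_coe, LinearMap.mem_ker]
    exact hx v (by exact_mod_cast hv)
  have := hle hμ
  rwa [LinearMap.mem_ker] at this

end AuxLemmas


section AuxLemmas2
set_option linter.unusedSectionVars false

variable {A : Type*} [NormedAddCommGroup A] [NormedSpace ℝ A] [FiniteDimensional ℝ A]

local notation "D" => Module.Dual ℝ A

/-- `b` is a nonnegative combination of elements of `Δ`. -/
def IsPosCombo (Δ : Finset D) (b : D) : Prop :=
  ∃ n : D → ℝ, (∀ e ∈ Δ, 0 ≤ n e) ∧ b = ∑ e ∈ Δ, n e • e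

lemma sum_single_rep {Δ : Finset D} {b : D} (hb : b ∈ Δ) (c : ℝ) :
    ∑ e ∈ Δ, (if e = b then c else 0) • e = c • b := by
  have h : ∀ e ∈ Δ, (if e = b then c else 0) • e = if e = b then c • b else 0 := by
    intro e _; by_cases h1 : e = b <;> simp [h1]
  rw [Finset.sum_congr rfl h, Finset.sum_ite_eq' Δ b (fun _ => c • b), if_pos hb]

lemma isPosCombo_self {Δ : Finset D} {b : D} (hb : b ∈ Δ) : IsPosCombo Δ b := by
  refine ⟨fun e => if e = b then 1 else 0, fun e _ => by positivity, ?_⟩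
  rw [sum_single_rep hb, one_smul]

lemma isPosCombo_eval_pos {Δ : Finset D} {b : D} (h : IsPosCombo Δ b) (hb : b ≠ 0)
    {u : A} (hu : ∀ e ∈ Δ, 0 < e u) : 0 < b u := by
  obtain ⟨n, hn0, hrep⟩ := h
  have hval : b u = ∑ e ∈ Δ, n e * e u := by
    rw [hrep, LinearMap.sum_apply]
    exact Finset.sum_congr rfl (fun e _ => by rw [LinearMap.smul_apply, smul_eq_mul])
  rw [hval]
  have hnz : ∃ e ∈ Δ, 0 < n e := by
    by_contra hcon
    push_neg at hcon
    apply hb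
    rw [hrep]
    refine Finset.sum_eq_zero (fun e he => ?_)
    have : n e = 0 := le_antisymm (hcon e he) (hn0 e he)
    rw [this, zero_smul]
  obtain ⟨e₀, he₀, hne₀⟩ := hnz
  refine Finset.sum_pos' (fun e he => mul_nonneg (hn0 e he) (hu e he).le) ?_
  exact ⟨e₀, he₀, mul_pos hne₀ (hu e₀ he₀)⟩

namespace RootWeightSystem

variable (S : RootWeightSystem A)

/-- `inn (·, y)` as a linear map. -/
def innL (y : D) : D →ₗ[ℝ] ℝ where
  toFun x := S.inn x y
  map_add' x z := S.inn_add_left x z y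
  map_smul' c x := by simpa using S.inn_smul_left c x y

lemma inn_sum_left {ι : Type*} (s : Finset ι) (f : ι → D) (y : D) :
    S.inn (∑ i ∈ s, f i) y = ∑ i ∈ s, S.inn (f i) y := map_sum (S.innL y) f s

lemma inn_sub_left (x z y : D) : S.inn (x - z) y = S.inn x y - S.inn z y :=
  map_sub (S.innL y) x z

lemma inn_nonzero {a : D} (ha : a ≠ 0) : S.inn a a ≠ 0 := ne_of_gt (S.inn_pos a ha)

lemma refl_apply (a x : D) :
    S.toRootWeightData.refl a x = x - (2 * S.inn x a / S.inn a a) • a := rfl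

lemma refl_mem_weyl {a : D} (ha : a ∈ S.Φ) :
    S.toRootWeightData.refl a ∈ S.toRootWeightData.weyl :=
  Submonoid.subset_closure ⟨a, ha, rfl⟩

lemma inn_refl_swap (b z a : D) :
    S.inn (S.toRootWeightData.refl b z) a = S.inn z (S.toRootWeightData.refl b a) := by
  have e1 : S.inn (S.toRootWeightData.refl b z) a
      = S.inn z a - (2 * S.inn z b / S.inn b b) * S.inn b a := by
    rw [refl_apply, inn_sub_left, S.inn_smul_left]
  have e2 : S.inn z (S.toRootWeightData.refl b a)
      = S.inn a z - (2 * S.inn a b / S.inn b b) * S.inn b z := by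
    rw [S.inn_symm, refl_apply, inn_sub_left, S.inn_smul_left]
  rw [e1, e2, S.inn_symm b a, S.inn_symm a z, S.inn_symm b z]
  ring

lemma refl_self {a : D} (ha : a ≠ 0) : S.toRootWeightData.refl a a = -a := by
  rw [refl_apply]
  rw [show 2 * S.inn a a / S.inn a a = 2 from by
    rw [mul_div_assoc, div_self (S.inn_nonzero ha), mul_one]]
  module

lemma refl_smul_self {a : D} (ha : a ≠ 0) (t : ℝ) :
    S.toRootWeightData.refl a (t • a) = -(t • a) := by
  rw [refl_apply, S.inn_smul_left]
  rw [show 2 * (t * S.inn a a) / S.inn a a = 2 * t from by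
    rw [show 2 * (t * S.inn a a) = 2 * t * S.inn a a from by ring, mul_div_assoc,
      div_self (S.inn_nonzero ha), mul_one]]
  module

lemma base_refl {Δ : Finset D} (hΔ : S.toRootWeightData.IsBase Δ) {b : D} (hb : b ∈ S.Φ) :
    S.toRootWeightData.IsBase (Δ.image (S.toRootWeightData.refl b)) :=
  S.base_weyl _ (S.refl_mem_weyl hb) Δ hΔ

lemma lam0_refl {Δ : Finset D} (hΔ : S.toRootWeightData.IsBase Δ) {b : D} (hb : b ∈ S.Φ) :
    S.lam0 (Δ.image (S.toRootWeightData.refl b))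
      = S.toRootWeightData.refl b (S.lam0 Δ) :=
  S.lam0_equivariant _ (S.refl_mem_weyl hb) Δ hΔ

lemma lam0_inn_nonneg {Δ : Finset D} (hΔ : S.toRootWeightData.IsBase Δ) {b : D}
    (hb : b ∈ Δ) : 0 ≤ S.inn (S.lam0 Δ) b := by
  have hbΦ : b ∈ S.Φ := hΔ.1 hb
  have hb0 : b ≠ 0 := S.root_ne_zero b hbΦ
  have hΔ' := S.base_refl hΔ hbΦ
  have hl : S.lam0 (Δ.image (S.toRootWeightData.refl b)) ∈ S.Λ := S.lam0_mem _ hΔ'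
  obtain ⟨n, hn0, hnrep⟩ := S.lam0_dominates Δ hΔ _ hl
  rw [S.lam0_refl hΔ hbΦ] at hnrep
  set c := 2 * S.inn (S.lam0 Δ) b / S.inn b b with hc
  have hrep2 : S.lam0 Δ - S.toRootWeightData.refl b (S.lam0 Δ) = c • b := by
    rw [refl_apply]; abel
  have hrep3 : S.lam0 Δ - S.toRootWeightData.refl b (S.lam0 Δ)
      = ∑ e ∈ Δ, (if e = b then c else 0) • e := by
    rw [hrep2, sum_single_rep hb]
  have huniq := rep_unique hΔ.2.1 (hnrep.symm.trans hrep3) b hb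
  rw [if_pos rfl] at huniq
  have hcnn : 0 ≤ c := huniq ▸ hn0 b hb
  by_contra hneg
  push_neg at hneg
  have : c < 0 := by
    rw [hc]
    apply div_neg_of_neg_of_pos _ (S.inn_pos b hb0)
    linarith
  linarith

lemma simple_inn_nonpos {Δ : Finset D} (hΔ : S.toRootWeightData.IsBase Δ) {a b : D}
    (ha : a ∈ Δ) (hb : b ∈ Δ) (hne : a ≠ b) : S.inn a b ≤ 0 := by
  by_contra hpos
  push_neg at hpos
  have haΦ : a ∈ S.Φ := hΔ.1 ha
  have hbΦ : b ∈ S.Φ := hΔ.1 hb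
  have ha0 : a ≠ 0 := S.root_ne_zero a haΦ
  set k := 2 * S.inn b a / S.inn a a with hk
  have hkpos : 0 < k := by
    rw [hk, S.inn_symm b a]
    exact div_pos (by linarith) (S.inn_pos a ha0)
  have hcΦ : S.toRootWeightData.refl a b ∈ S.Φ := S.refl_mem a haΦ b hbΦ
  have hcval : S.toRootWeightData.refl a b = b - k • a := by
    rw [refl_apply, hk]
  have hpair : ∀ (p q : ℝ), ∑ e ∈ Δ, (if e = b then p else if e = a then q else 0) • e
      = p • b + q • a := by
    intro p q
    have h : ∀ e ∈ Δ, (if e = b then p else if e = a then q else 0) • e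
        = (if e = b then p • b else 0) + (if e = a then q • a else 0) := by
      intro e _
      by_cases h1 : e = b
      · simp [h1, Ne.symm hne]
      · by_cases h2 : e = a <;> simp [h1, h2, hne]
    rw [Finset.sum_congr rfl h, Finset.sum_add_distrib,
      Finset.sum_ite_eq' Δ b (fun _ => p • b), Finset.sum_ite_eq' Δ a (fun _ => q • a),
      if_pos hb, if_pos ha]
  rcases hΔ.2.2 _ hcΦ with ⟨n, hn0, hrep⟩ | ⟨n, hn0, hrep⟩
  · have hrep2 : S.toRootWeightData.refl a b
        = ∑ e ∈ Δ, (if e = b then (1:ℝ) else if e = a then -k else 0) • e := by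
      rw [hpair, hcval]; module
    have huq := rep_unique hΔ.2.1 (hrep.symm.trans hrep2) a ha
    rw [if_neg hne, if_pos rfl] at huq
    have := hn0 a ha
    rw [huq] at this
    linarith
  · have hrep2 : ∑ e ∈ Δ, n e • e
        = ∑ e ∈ Δ, (if e = b then (-1:ℝ) else if e = a then k else 0) • e := by
      rw [hpair]
      have hsum : ∑ e ∈ Δ, n e • e = -(S.toRootWeightData.refl a b) := by
        rw [hrep, neg_neg]
      rw [hsum, hcval]; module
    have huq := rep_unique hΔ.2.1 hrep2 b hb
    rw [if_pos rfl] at huq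
    have := hn0 b hb
    rw [huq] at this
    linarith

end RootWeightSystem

end AuxLemmas2


section AuxLemmas3
set_option linter.unusedSectionVars false
set_option maxHeartbeats 1000000

variable {A : Type*} [NormedAddCommGroup A] [NormedSpace ℝ A] [FiniteDimensional ℝ A]

local notation "D" => Module.Dual ℝ A

namespace RootWeightSystem

variable (S : RootWeightSystem A)

lemma pos_or_neg {Δ : Finset D} (hΔ : S.toRootWeightData.IsBase Δ) {c : D} (hc : c ∈ S.Φ) :
    IsPosCombo Δ c ∨ IsPosCombo Δ (-c) := by
  rcases hΔ.2.2 c hc with ⟨n, hn0, hrep⟩ | ⟨n, hn0, hrep⟩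
  · exact Or.inl ⟨n, hn0, hrep⟩
  · exact Or.inr ⟨n, hn0, by rw [hrep, neg_neg]⟩

lemma not_pos_and_neg {Δ : Finset D} (hΔ : S.toRootWeightData.IsBase Δ) {c : D}
    (hc0 : c ≠ 0) (h1 : IsPosCombo Δ c) (h2 : IsPosCombo Δ (-c)) : False := by
  obtain ⟨n, hn0, hn⟩ := h1
  obtain ⟨m, hm0, hm⟩ := h2
  have hz : ∑ e ∈ Δ, (n e + m e) • e = ∑ e ∈ Δ, (0:ℝ) • e := by
    rw [Finset.sum_congr rfl (fun e _ => add_smul (n e) (m e) e), Finset.sum_add_distrib,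
      ← hn, ← hm]
    simp
  have huq := rep_unique hΔ.2.1 hz
  apply hc0
  rw [hn]
  refine Finset.sum_eq_zero (fun e he => ?_)
  have h1 := huq e he
  have h2 := hn0 e he
  have h3 := hm0 e he
  have : n e = 0 := by linarith
  rw [this, zero_smul]

lemma isPosCombo_smul {Δ : Finset D} {t : ℝ} (ht : 0 ≤ t) {a : D} (ha : a ∈ Δ) :
    IsPosCombo Δ (t • a) := by
  refine ⟨fun e => if e = a then t else 0, fun e _ => by by_cases h : e = a <;> simp [h, ht], ?_⟩
  rw [sum_single_rep ha]

lemma refl_refl {a : D} (ha : a ≠ 0) (x : D) :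
    S.toRootWeightData.refl a (S.toRootWeightData.refl a x) = x := by
  have hs := S.inn_nonzero ha
  rw [refl_apply S a (S.toRootWeightData.refl a x), refl_apply S a x]
  rw [inn_sub_left, S.inn_smul_left]
  rw [show 2 * (S.inn x a - 2 * S.inn x a / S.inn a a * S.inn a a) / S.inn a a
      = -(2 * S.inn x a / S.inn a a) from by field_simp; ring]
  module

lemma refl_injective {a : D} (ha : a ≠ 0) :
    Function.Injective (S.toRootWeightData.refl a) := fun u v h => by
  rw [← S.refl_refl ha u, h, S.refl_refl ha v]

/-- The reflection as a linear map. -/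
def reflL (a : D) : D →ₗ[ℝ] D where
  toFun := S.toRootWeightData.refl a
  map_add' x y := by
    simp only [refl_apply, S.inn_add_left]
    rw [show 2 * (S.inn x a + S.inn y a) / S.inn a a
        = 2 * S.inn x a / S.inn a a + 2 * S.inn y a / S.inn a a from by ring]
    module
  map_smul' c x := by
    simp only [refl_apply, S.inn_smul_left, RingHom.id_apply]
    rw [show 2 * (c * S.inn x a) / S.inn a a = c * (2 * S.inn x a / S.inn a a) from by ring]
    module

lemma refl_sum_smul {Δ : Finset D} (a : D) (n : D → ℝ) :
    S.toRootWeightData.refl a (∑ e ∈ Δ, n e • e)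
      = ∑ e ∈ Δ, n e • S.toRootWeightData.refl a e := by
  rw [show S.toRootWeightData.refl a = ⇑(S.reflL a) from rfl, map_sum]
  exact Finset.sum_congr rfl (fun e _ => by rw [map_smul])

lemma isPosCombo_image_refl {a : D} (ha : a ≠ 0) {Δ : Finset D} {d : D}
    (hd : IsPosCombo Δ d) :
    IsPosCombo (Δ.image (S.toRootWeightData.refl a)) (S.toRootWeightData.refl a d) := by
  obtain ⟨n, hn0, hn⟩ := hd
  refine ⟨fun e => n (S.toRootWeightData.refl a e), ?_, ?_⟩
  · intro e he
    obtain ⟨e₀, he₀, rfl⟩ := Finset.mem_image.mp he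
    show 0 ≤ n (S.toRootWeightData.refl a (S.toRootWeightData.refl a e₀))
    rw [S.refl_refl ha e₀]
    exact hn0 e₀ he₀
  · rw [Finset.sum_image (fun u _ v _ h => S.refl_injective ha h), hn, refl_sum_smul]
    refine Finset.sum_congr rfl (fun e _ => ?_)
    show n e • S.toRootWeightData.refl a e
      = n (S.toRootWeightData.refl a (S.toRootWeightData.refl a e)) • S.toRootWeightData.refl a e
    rw [S.refl_refl ha e]

lemma image_image_refl {a : D} (ha : a ≠ 0) (Δ : Finset D) :
    (Δ.image (S.toRootWeightData.refl a)).image (S.toRootWeightData.refl a) = Δ := by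
  erw [Finset.image_image]
  have h : (S.toRootWeightData.refl a ∘ S.toRootWeightData.refl a) = id :=
    funext (S.refl_refl ha)
  rw [h, Finset.image_id]

lemma flip_pos {Δ : Finset D} (hΔ : S.toRootWeightData.IsBase Δ) {a : D} (ha : a ∈ Δ)
    {d : D} (hdΦ : d ∈ S.Φ) (hd : IsPosCombo Δ d) (hda : ∀ t : ℝ, d ≠ t • a) :
    IsPosCombo Δ (S.toRootWeightData.refl a d) := by
  have haΦ : a ∈ S.Φ := hΔ.1 ha
  have ha0 : a ≠ 0 := S.root_ne_zero a haΦ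
  have hrΦ : S.toRootWeightData.refl a d ∈ S.Φ := S.refl_mem a haΦ d hdΦ
  rcases S.pos_or_neg hΔ hrΦ with h | h
  · exact h
  · exfalso
    obtain ⟨n, hn0, hn⟩ := hd
    have he₀ : ∃ e₀ ∈ Δ, e₀ ≠ a ∧ 0 < n e₀ := by
      by_contra hcon
      push_neg at hcon
      apply hda (n a)
      rw [hn]
      rw [Finset.sum_eq_single_of_mem a ha (fun e he hne => by
        have h1 := hcon e he hne
        have h2 := hn0 e he
        have : n e = 0 := le_antisymm h1 h2
        rw [this, zero_smul])]
    obtain ⟨e₀, he₀Δ, he₀a, he₀pos⟩ := he₀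
    obtain ⟨m, hm0, hm⟩ := h
    set k := 2 * S.inn d a / S.inn a a with hk
    have hsum : ∑ e ∈ Δ, (n e + ((if e = a then -k else 0) + m e)) • e = 0 := by
      rw [Finset.sum_congr rfl (fun e _ => by
        rw [add_smul, add_smul] :
        ∀ e ∈ Δ, (n e + ((if e = a then -k else 0) + m e)) • e
          = n e • e + ((if e = a then -k else 0) • e + m e • e))]
      rw [Finset.sum_add_distrib, Finset.sum_add_distrib, sum_single_rep ha, ← hn, ← hm]
      rw [show S.toRootWeightData.refl a d = d - k • a from by rw [refl_apply, hk]]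
      module
    have := sum_eq_zero_coeffs hΔ.2.1 hsum e₀ he₀Δ
    rw [if_neg he₀a] at this
    have := hm0 e₀ he₀Δ
    linarith

/-- One step of the chamber-chasing algorithm at the point `x'`. -/
def StepRel (x' : A) (Δ₁ Δ₂ : Finset D) : Prop :=
  ∃ b ∈ Δ₁, b x' < 0 ∧ Δ₂ = Δ₁.image (S.toRootWeightData.refl b)

/-- The set of positive roots negative at `x'`. -/
noncomputable def Nset (x' : A) (Δ : Finset D) : Finset D :=
  S.Φ.filter (fun c => IsPosCombo Δ c ∧ c x' < 0)

lemma step_decreases {x' : A} {Δ : Finset D} (hΔ : S.toRootWeightData.IsBase Δ)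
    {a : D} (haΔ : a ∈ Δ) (hax : a x' < 0) :
    S.Nset x' (Δ.image (S.toRootWeightData.refl a)) ⊂ S.Nset x' Δ := by
  have haΦ : a ∈ S.Φ := hΔ.1 haΔ
  have ha0 : a ≠ 0 := S.root_ne_zero a haΦ
  constructor
  · intro c hc
    rw [Nset, Finset.mem_filter] at hc
    obtain ⟨hcΦ, hcpos, hcx⟩ := hc
    have hc0 : c ≠ 0 := S.root_ne_zero c hcΦ
    have hd : IsPosCombo Δ (S.toRootWeightData.refl a c) := by
      have h2 := S.isPosCombo_image_refl ha0 hcpos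
      rwa [image_image_refl S ha0] at h2
    have hdΦ : S.toRootWeightData.refl a c ∈ S.Φ := S.refl_mem a haΦ c hcΦ
    set d := S.toRootWeightData.refl a c with hddef
    have hcd : c = S.toRootWeightData.refl a d := by rw [hddef, S.refl_refl ha0]
    by_cases hta : ∃ t : ℝ, d = t • a
    · obtain ⟨t, ht⟩ := hta
      exfalso
      have hceq : c = -(t • a) := by rw [hcd, ht, S.refl_smul_self ha0]
      have ht0 : t ≠ 0 := by
        intro h
        apply hc0
        rw [hceq, h, zero_smul, neg_zero]
      rcases lt_or_gt_of_ne ht0 with htneg | htpos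
      · have hdne : d ≠ 0 := S.root_ne_zero _ hdΦ
        refine S.not_pos_and_neg hΔ hdne hd ?_
        have : -d = (-t) • a := by rw [ht]; exact (neg_smul t a).symm
        rw [this]
        exact isPosCombo_smul (by linarith) haΔ
      · apply absurd hcx
        push_neg
        have : c x' = -(t * a x') := by rw [hceq]; simp
        rw [this]
        nlinarith
    · push_neg at hta
      have := S.flip_pos hΔ haΔ hdΦ hd hta
      rw [← hcd] at this
      rw [Nset, Finset.mem_filter]
      exact ⟨hcΦ, this, hcx⟩
  · intro hsub
    have haN : a ∈ S.Nset x' Δ := by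
      rw [Nset, Finset.mem_filter]
      exact ⟨haΦ, isPosCombo_self haΔ, hax⟩
    have := hsub haN
    rw [Nset, Finset.mem_filter] at this
    obtain ⟨-, hapos, -⟩ := this
    have h2 := S.isPosCombo_image_refl ha0 hapos
    rw [image_image_refl S ha0, S.refl_self ha0] at h2
    exact S.not_pos_and_neg hΔ (S.root_ne_zero a haΦ) (isPosCombo_self haΔ) h2

lemma exists_chain {x' : A} (hreg : ∀ c ∈ S.Φ, c x' ≠ 0) :
    ∀ (n : ℕ) (Δ : Finset D), (S.Nset x' Δ).card ≤ n → S.toRootWeightData.IsBase Δ →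
    ∃ Δs, Relation.ReflTransGen (S.StepRel x') Δ Δs ∧ S.toRootWeightData.IsBase Δs ∧
      ∀ a ∈ Δs, 0 < a x' := by
  have terminal : ∀ Δ : Finset D, S.toRootWeightData.IsBase Δ →
      (¬ ∃ b ∈ Δ, b x' < 0) → ∀ a ∈ Δ, 0 < a x' := by
    intro Δ hΔ hneg a ha
    push_neg at hneg
    rcases lt_trichotomy (a x') 0 with h | h | h
    · exact absurd h (not_lt.mpr (hneg a ha))
    · exact absurd h (hreg a (hΔ.1 ha))
    · exact h
  intro n
  induction n with
  | zero =>
    intro Δ hcard hΔ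
    refine ⟨Δ, Relation.ReflTransGen.refl, hΔ, ?_⟩
    apply terminal Δ hΔ
    rintro ⟨b, hbΔ, hbx⟩
    have hbN : b ∈ S.Nset x' Δ := by
      rw [Nset, Finset.mem_filter]
      exact ⟨hΔ.1 hbΔ, isPosCombo_self hbΔ, hbx⟩
    have := Finset.card_pos.mpr ⟨b, hbN⟩
    omega
  | succ n ih =>
    intro Δ hcard hΔ
    by_cases hneg : ∃ b ∈ Δ, b x' < 0
    · obtain ⟨b, hbΔ, hbx⟩ := hneg
      have hstep := S.step_decreases hΔ hbΔ hbx
      have hlt := Finset.card_lt_card hstep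
      have hΔ2 : S.toRootWeightData.IsBase (Δ.image (S.toRootWeightData.refl b)) :=
        S.base_refl hΔ (hΔ.1 hbΔ)
      obtain ⟨Δs, hchain, hbase, hpos⟩ := ih (Δ.image (S.toRootWeightData.refl b))
        (by omega) hΔ2
      exact ⟨Δs, Relation.ReflTransGen.head ⟨b, hbΔ, hbx, rfl⟩ hchain, hbase, hpos⟩
    · exact ⟨Δ, Relation.ReflTransGen.refl, hΔ, terminal Δ hΔ hneg⟩

end RootWeightSystem

end AuxLemmas3


section AuxLemmas4
set_option linter.unusedSectionVars false
set_option maxHeartbeats 1000000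

variable {A : Type*} [NormedAddCommGroup A] [NormedSpace ℝ A] [FiniteDimensional ℝ A]

local notation "D" => Module.Dual ℝ A

lemma exists_dominant_point {Δ : Finset D}
    (hli : LinearIndependent ℝ (fun a : (Δ : Set D) => (a : D))) :
    ∃ u : A, ∀ a ∈ Δ, a u = 1 := by
  classical
  have hli' : LinearIndepOn ℝ id (Δ : Set D) := hli
  let B := Module.Basis.extend hli'
  let g : Module.Dual ℝ D := B.constr ℝ (fun i => if (i : D) ∈ Δ then (1:ℝ) else 0)
  refine ⟨(Module.evalEquiv ℝ A).symm g, fun a ha => ?_⟩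
  rw [Module.apply_evalEquiv_symm_apply]
  have haE : a ∈ hli'.extend (Set.subset_univ _) :=
    hli'.subset_extend _ (Finset.mem_coe.mpr ha)
  have h3 := B.constr_basis ℝ (fun i => if (i : D) ∈ Δ then (1:ℝ) else 0) ⟨a, haE⟩
  rw [Module.Basis.extend_apply_self] at h3
  have h4 : g a = if a ∈ Δ then (1:ℝ) else 0 := h3
  rw [h4, if_pos ha]

lemma rtg_crossing {α : Type*} {r : α → α → Prop} {C : Set α} {p m : α}
    (h : Relation.ReflTransGen r p m) (hp : p ∈ C) (hm : m ∉ C) :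
    ∃ u v, r u v ∧ u ∈ C ∧ v ∉ C := by
  revert hm
  induction h with
  | refl => intro hm; exact absurd hp hm
  | @tail b c hpb hbc ih =>
    intro hc
    by_cases hb : b ∈ C
    · exact ⟨b, c, hbc, hb, hc⟩
    · exact ih hb

lemma graphConnected_singleton {inn : D → D → ℝ} (v : D) :
    GraphConnected inn ({v} : Set D) := by
  intro m hm n hn
  rw [Set.mem_singleton_iff] at hm hn
  rw [hm, hn]

lemma graphConnected_insert {inn : D → D → ℝ} (hsym : ∀ x y, inn x y = inn y x)
    {M : Set D} (hM : GraphConnected inn M)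
    {v p : D} (hp : p ∈ M) (hpv : inn p v ≠ 0) : GraphConnected inn (M ∪ {v}) := by
  have hlift : ∀ {m n : D},
      Relation.ReflTransGen (fun x y => x ∈ M ∧ y ∈ M ∧ inn x y ≠ 0) m n →
      Relation.ReflTransGen (fun x y => x ∈ M ∪ {v} ∧ y ∈ M ∪ {v} ∧ inn x y ≠ 0) m n := by
    intro m n h
    exact Relation.ReflTransGen.mono (p := fun x y => x ∈ M ∪ {v} ∧ y ∈ M ∪ {v} ∧ inn x y ≠ 0) (fun x y (hxy : x ∈ M ∧ y ∈ M ∧ inn x y ≠ 0) => ⟨Or.inl hxy.1, Or.inl hxy.2.1, hxy.2.2⟩) _ _ h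
  intro m hm n hn
  rcases hm with hm | hm <;> rcases hn with hn | hn
  · exact hlift (hM m hm n hn)
  · rw [Set.mem_singleton_iff] at hn
    subst hn
    refine Relation.ReflTransGen.tail (hlift (hM m hm p hp)) ?_
    exact ⟨Or.inl hp, Or.inr rfl, hpv⟩
  · rw [Set.mem_singleton_iff] at hm
    subst hm
    refine Relation.ReflTransGen.head ?_ (hlift (hM p hp n hn))
    exact ⟨Or.inr rfl, Or.inl hp, by rw [hsym]; exact hpv⟩
  · rw [Set.mem_singleton_iff] at hm hn
    rw [hm, hn]

lemma exists_adjacent {inn : D → D → ℝ} {Y : Finset D} {l0 : D}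
    (hconn : GraphConnected inn ((↑Y : Set D) ∪ {l0})) (hY0 : ∀ a ∈ Y, inn a a ≠ 0)
    {B : Finset D} (hB : B ⊆ Y) (hBne : B ≠ Y) :
    ∃ a ∈ Y, a ∉ B ∧ ∃ p, (p ∈ (↑B : Set D) ∪ {l0}) ∧ inn p a ≠ 0 := by
  have hmex : ∃ m ∈ Y, m ∉ B := by
    by_contra h
    push_neg at h
    exact hBne (Finset.Subset.antisymm hB h)
  obtain ⟨m, hmY, hmB⟩ := hmex
  by_cases hmv : m ∈ (↑B : Set D) ∪ {l0}
  · have hm0 : m = l0 := by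
      rcases hmv with h | h
      · exact absurd (Finset.mem_coe.mp h) hmB
      · exact h
    exact ⟨m, hmY, hmB, m, by rw [hm0]; exact Or.inr rfl, hY0 m hmY⟩
  · have hpath := hconn l0 (Or.inr rfl) m (Or.inl (Finset.mem_coe.mpr hmY))
    obtain ⟨u, v, hedge, huC, hvC⟩ :=
      rtg_crossing (C := (↑B : Set D) ∪ {l0}) hpath (Or.inr rfl) hmv
    obtain ⟨huM, hvM, huv⟩ := hedge
    have hvY : v ∈ Y := by
      rcases hvM with h | h
      · exact Finset.mem_coe.mp h
      · exact absurd (Or.inr h) hvC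
    have hvB : v ∉ B := fun h => hvC (Or.inl (Finset.mem_coe.mpr h))
    exact ⟨v, hvY, hvB, u, huC, huv⟩

lemma exists_perturb (Φ : Finset D) (x u : A) :
    ∃ t : ℝ, 0 < t ∧ ∀ b ∈ Φ, (0 < b x → 0 < b (x + t • u)) ∧ (b x < 0 → b (x + t • u) < 0)
      ∧ b (x + t • u) = b x + t * b u := by
  classical
  have heval : ∀ (t : ℝ) (b : D), b (x + t • u) = b x + t * b u := by
    intro t b
    rw [map_add, map_smul, smul_eq_mul]
  set crit := Φ.filter (fun b => b x ≠ 0) with hcrit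
  by_cases hne : crit.Nonempty
  · set t := min 1 (crit.inf' hne (fun b => |b x| / (1 + |b u|))) with ht
    have ht0 : 0 < t := by
      rw [ht]
      apply lt_min one_pos
      rw [Finset.lt_inf'_iff]
      intro b hb
      have hbx : b x ≠ 0 := (Finset.mem_filter.mp hb).2
      have : 0 < |b x| := abs_pos.mpr hbx
      positivity
    have hkey : ∀ b ∈ crit, t * |b u| < |b x| := by
      intro b hb
      have hbx : b x ≠ 0 := (Finset.mem_filter.mp hb).2
      have h1 : t ≤ |b x| / (1 + |b u|) :=
        le_trans (min_le_right _ _) (Finset.inf'_le _ hb)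
      have h2 : (0:ℝ) < 1 + |b u| := by positivity
      have habs : 0 < |b x| := abs_pos.mpr hbx
      have h3 : |b x| / (1 + |b u|) * |b u| < |b x| := by
        rw [div_mul_eq_mul_div, div_lt_iff₀ h2]
        nlinarith [abs_nonneg (b u)]
      calc t * |b u| ≤ |b x| / (1 + |b u|) * |b u| :=
            mul_le_mul_of_nonneg_right h1 (abs_nonneg _)
        _ < |b x| := h3
    refine ⟨t, ht0, fun b hb => ⟨?_, ?_, heval t b⟩⟩
    · intro hbx
      have hb' : b ∈ crit := Finset.mem_filter.mpr ⟨hb, ne_of_gt hbx⟩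
      have hk := hkey b hb'
      have habs : |b x| = b x := abs_of_pos hbx
      have hb2 : -(t * |b u|) ≤ t * b u := by
        have := mul_le_mul_of_nonneg_left (neg_abs_le (b u)) ht0.le
        nlinarith
      rw [heval t b]
      linarith
    · intro hbx
      have hb' : b ∈ crit := Finset.mem_filter.mpr ⟨hb, ne_of_lt hbx⟩
      have hk := hkey b hb'
      have habs : |b x| = -(b x) := abs_of_neg hbx
      have hb2 : t * b u ≤ t * |b u| := mul_le_mul_of_nonneg_left (le_abs_self (b u)) ht0.le
      rw [heval t b]
      linarith
  · refine ⟨1, one_pos, fun b hb => ⟨?_, ?_, heval 1 b⟩⟩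
    all_goals
      intro hbx
      exfalso
      exact hne ⟨b, Finset.mem_filter.mpr ⟨hb, by intro h; rw [h] at hbx; exact lt_irrefl 0 hbx⟩⟩

namespace RootWeightSystem

variable (S : RootWeightSystem A)

lemma pos_iff_eval {Δ : Finset D} (hΔ : S.toRootWeightData.IsBase Δ) {u : A}
    (hu : ∀ a ∈ Δ, 0 < a u) {c : D} (hc : c ∈ S.Φ) :
    c u ≠ 0 ∧ (IsPosCombo Δ c ↔ 0 < c u) := by
  have hc0 : c ≠ 0 := S.root_ne_zero c hc
  rcases S.pos_or_neg hΔ hc with h | h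
  · have hpos := isPosCombo_eval_pos h hc0 hu
    exact ⟨ne_of_gt hpos, ⟨fun _ => hpos, fun _ => h⟩⟩
  · have hneg : 0 < (-c) u := isPosCombo_eval_pos h (neg_ne_zero.mpr hc0) hu
    rw [LinearMap.neg_apply] at hneg
    have hcu : c u < 0 := by linarith
    refine ⟨ne_of_lt hcu, ⟨fun hp => ?_, fun hlt => absurd hlt (not_lt.mpr hcu.le)⟩⟩
    exact absurd (isPosCombo_eval_pos hp hc0 hu) (not_lt.mpr hcu.le)

lemma lam0_eq_of_pos {Δ₁ Δ₂ : Finset D} (h1 : S.toRootWeightData.IsBase Δ₁)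
    (h2 : S.toRootWeightData.IsBase Δ₂)
    (hpos : ∀ e ∈ Δ₂, IsPosCombo Δ₁ e) : S.lam0 Δ₁ = S.lam0 Δ₂ := by
  obtain ⟨n, hn0, hn⟩ := S.lam0_dominates Δ₁ h1 _ (S.lam0_mem Δ₂ h2)
  obtain ⟨m, hm0, hm⟩ := S.lam0_dominates Δ₂ h2 _ (S.lam0_mem Δ₁ h1)
  choose p hp0 hp using hpos
  have hm' : S.lam0 Δ₂ - S.lam0 Δ₁
      = ∑ f ∈ Δ₁, (∑ e ∈ Δ₂.attach, m ↑e * p ↑e e.2 f) • f := by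
    rw [hm]
    calc ∑ e ∈ Δ₂, m e • e = ∑ e ∈ Δ₂.attach, m ↑e • (↑e : D) :=
          (Finset.sum_attach Δ₂ (fun e => m e • e)).symm
      _ = ∑ e ∈ Δ₂.attach, ∑ f ∈ Δ₁, (m ↑e * p ↑e e.2 f) • f := by
          refine Finset.sum_congr rfl (fun e _ => ?_)
          calc m ↑e • (↑e : D) = m ↑e • ∑ f ∈ Δ₁, p ↑e e.2 f • f :=
                congrArg (fun z => m ↑e • z) (hp ↑e e.2)
            _ = ∑ f ∈ Δ₁, (m ↑e * p ↑e e.2 f) • f := by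
                rw [Finset.smul_sum]
                exact Finset.sum_congr rfl (fun f _ => smul_smul _ _ _)
      _ = ∑ f ∈ Δ₁, ∑ e ∈ Δ₂.attach, (m ↑e * p ↑e e.2 f) • f := Finset.sum_comm
      _ = ∑ f ∈ Δ₁, (∑ e ∈ Δ₂.attach, m ↑e * p ↑e e.2 f) • f := by
          refine Finset.sum_congr rfl (fun f _ => ?_)
          rw [Finset.sum_smul]
  have hzero : ∑ f ∈ Δ₁, (n f + ∑ e ∈ Δ₂.attach, m ↑e * p ↑e e.2 f) • f
      = ∑ f ∈ Δ₁, (0:ℝ) • f := by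
    rw [Finset.sum_congr rfl (fun f _ => add_smul (n f) _ f), Finset.sum_add_distrib,
      ← hn, ← hm']
    simp
  have huq := rep_unique h1.2.1 hzero
  have hn0' : ∀ f ∈ Δ₁, n f = 0 := by
    intro f hf
    have h4 := huq f hf
    have h5 : 0 ≤ ∑ e ∈ Δ₂.attach, m ↑e * p ↑e e.2 f :=
      Finset.sum_nonneg (fun e _ => mul_nonneg (hm0 ↑e e.2) (hp0 ↑e e.2 f hf))
    have h6 := hn0 f hf
    linarith
  have hfin : S.lam0 Δ₁ - S.lam0 Δ₂ = 0 := by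
    rw [hn]
    exact Finset.sum_eq_zero (fun f hf => by rw [hn0' f hf, zero_smul])
  exact sub_eq_zero.mp hfin

end RootWeightSystem

lemma isBase_iff_of_phi_eq {S T : RootWeightSystem A} (hΦ : S.Φ = T.Φ) (Δ : Finset D) :
    S.toRootWeightData.IsBase Δ ↔ T.toRootWeightData.IsBase Δ := by
  unfold RootWeightData.IsBase
  rw [show S.toRootWeightData.Φ = T.toRootWeightData.Φ from hΦ]

lemma refl_eq_of_inn_eq {S T : RootWeightSystem A} (hinn : S.inn = T.inn) (b : D) :
    S.toRootWeightData.refl b = T.toRootWeightData.refl b := by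
  funext x
  show x - (2 * S.inn x b / S.inn b b) • b = x - (2 * T.inn x b / T.inn b b) • b
  rw [hinn]

end AuxLemmas4


section AuxLemmas5
set_option linter.unusedSectionVars false
set_option maxHeartbeats 1000000

variable {A : Type*} [NormedAddCommGroup A] [NormedSpace ℝ A] [FiniteDimensional ℝ A]

local notation "D" => Module.Dual ℝ A

/-- The highest weights of `S` and `T` at the base `Δ₁` have the same sign pattern. -/
def SamePattern (S T : RootWeightSystem A) (Δ₁ : Finset D) : Prop :=
  ∀ a ∈ S.Φ, (0 < S.inn (S.lam0 Δ₁) a ↔ 0 < S.inn (T.lam0 Δ₁) a) ∧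
    (S.inn (S.lam0 Δ₁) a = 0 ↔ S.inn (T.lam0 Δ₁) a = 0)

lemma samePattern_symm {S T : RootWeightSystem A} (hΦ : S.Φ = T.Φ) (hinn : S.inn = T.inn)
    {Δ₁ : Finset D} (h : SamePattern S T Δ₁) : SamePattern T S Δ₁ := by
  intro a ha
  rw [← hΦ] at ha
  obtain ⟨h1, h2⟩ := h a ha
  rw [← hinn]
  exact ⟨h1.symm, h2.symm⟩

lemma samePattern_step {S T : RootWeightSystem A} (hΦ : S.Φ = T.Φ) (hinn : S.inn = T.inn)
    {Δ₁ : Finset D} (h1S : S.toRootWeightData.IsBase Δ₁) {b : D} (hb : b ∈ Δ₁)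
    (hP : SamePattern S T Δ₁) :
    SamePattern S T (Δ₁.image (S.toRootWeightData.refl b)) := by
  have hbΦ : b ∈ S.Φ := h1S.1 hb
  have hbΦT : b ∈ T.Φ := hΦ ▸ hbΦ
  have h1T : T.toRootWeightData.IsBase Δ₁ := (isBase_iff_of_phi_eq hΦ Δ₁).mp h1S
  have hSlam : S.lam0 (Δ₁.image (S.toRootWeightData.refl b))
      = S.toRootWeightData.refl b (S.lam0 Δ₁) := S.lam0_refl h1S hbΦ
  have hTlam : T.lam0 (Δ₁.image (S.toRootWeightData.refl b))
      = S.toRootWeightData.refl b (T.lam0 Δ₁) := by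
    rw [refl_eq_of_inn_eq hinn b]
    exact T.lam0_refl h1T hbΦT
  intro a ha
  rw [hSlam, hTlam, S.inn_refl_swap b (S.lam0 Δ₁) a, S.inn_refl_swap b (T.lam0 Δ₁) a]
  exact hP (S.toRootWeightData.refl b a) (S.refl_mem b hbΦ a ha)

lemma samePattern_chain {S T : RootWeightSystem A} (hΦ : S.Φ = T.Φ) (hinn : S.inn = T.inn)
    {x' : A} {Δ₁ Δ₂ : Finset D}
    (hchain : Relation.ReflTransGen (S.StepRel x') Δ₁ Δ₂)
    (h1 : S.toRootWeightData.IsBase Δ₁) (hP : SamePattern S T Δ₁) :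
    S.toRootWeightData.IsBase Δ₂ ∧ SamePattern S T Δ₂ := by
  induction hchain with
  | refl => exact ⟨h1, hP⟩
  | @tail Δa Δb hab hbstep ih =>
    obtain ⟨hbaseA, hPA⟩ := ih
    obtain ⟨b, hbΔ, hbx, rfl⟩ := hbstep
    exact ⟨S.base_refl hbaseA (hbaseA.1 hbΔ), samePattern_step hΦ hinn hbaseA hbΔ hPA⟩

lemma samePattern_all {S T : RootWeightSystem A} (hΦ : S.Φ = T.Φ) (hinn : S.inn = T.inn)
    {Δref : Finset D} (hΔref : S.toRootWeightData.IsBase Δref)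
    (hsame : SamePattern S T Δref) :
    ∀ Δ₁, S.toRootWeightData.IsBase Δ₁ → SamePattern S T Δ₁ := by
  intro Δ₁ h1
  obtain ⟨u, hu⟩ := exists_dominant_point h1.2.1
  have hu1 : ∀ a ∈ Δ₁, 0 < a u := fun a ha => by rw [hu a ha]; exact one_pos
  have hreg : ∀ c ∈ S.Φ, c u ≠ 0 := fun c hc => (S.pos_iff_eval h1 hu1 hc).1
  obtain ⟨Δs, hchain, hbase, hpos⟩ :=
    S.exists_chain hreg (S.Nset u Δref).card Δref le_rfl hΔref
  obtain ⟨hbase', hP⟩ := samePattern_chain hΦ hinn hchain hΔref hsame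
  have hposeq : ∀ e ∈ Δ₁, IsPosCombo Δs e := by
    intro e he
    exact (S.pos_iff_eval hbase hpos (h1.1 he)).2.mpr (hu1 e he)
  have hS : S.lam0 Δs = S.lam0 Δ₁ := S.lam0_eq_of_pos hbase h1 hposeq
  have hT : T.lam0 Δs = T.lam0 Δ₁ :=
    T.lam0_eq_of_pos ((isBase_iff_of_phi_eq hΦ Δs).mp hbase)
      ((isBase_iff_of_phi_eq hΦ Δ₁).mp h1) hposeq
  intro a ha
  have := hP a ha
  rwa [hS, hT] at this

end AuxLemmas5


section AuxLemmas6
set_option linter.unusedSectionVars false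
set_option maxHeartbeats 1000000

variable {A : Type*} [NormedAddCommGroup A] [NormedSpace ℝ A] [FiniteDimensional ℝ A]

local notation "D" => Module.Dual ℝ A

lemma eval_sum_smul (B : Finset D) (c : D → ℝ) (x : A) :
    (∑ a ∈ B, c a • a) x = ∑ a ∈ B, c a * a x := by
  rw [LinearMap.sum_apply]
  exact Finset.sum_congr rfl fun a _ => by rw [LinearMap.smul_apply, smul_eq_mul]

namespace RootWeightSystem

variable (S : RootWeightSystem A)

lemma grow_aux {Δ Δx Y : Finset D} {x : A}
    (hΔ : S.toRootWeightData.IsBase Δ) (hΔx : S.toRootWeightData.IsBase Δx)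
    (hA : ∀ a ∈ Y, a x = 0)
    (hface2 : ∀ l ∈ S.Λ, ¬ supp Δ (S.lam0 Δ - l) ⊆ Y → 0 < (S.lam0 Δ - l) x)
    (hG1 : S.lam0 Δ - S.lam0 Δx ∈ Submodule.span ℝ (Y : Set D))
    {l0T : D} (hedge : ∀ a ∈ S.Φ, S.inn l0T a = 0 ↔ S.inn (S.lam0 Δx) a = 0)
    {Y'' : Finset D} (hY''Δx : Y'' ⊆ Δx) (hY''x : ∀ a ∈ Y'', a x = 0)
    (hconn : GraphConnected S.inn ((↑Y'' : Set D) ∪ {l0T})) :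
    ∀ (n : ℕ) (B : Finset D), B ⊆ Y'' → Y''.card - B.card ≤ n →
    GraphConnected S.inn ((↑B : Set D) ∪ {l0T}) →
    (∀ a ∈ B, (a : D) ∈ Submodule.span ℝ (Y : Set D)) →
    (∃ μ ∈ S.Λ, ∃ c : D → ℝ, (∀ a ∈ B, 0 < c a) ∧ S.lam0 Δx - μ = ∑ a ∈ B, c a • a) →
    ∀ a ∈ Y'', (a : D) ∈ Submodule.span ℝ (Y : Set D) := by
  have hY0 : ∀ a ∈ Y'', S.inn a a ≠ 0 := fun a ha =>
    S.inn_nonzero (S.root_ne_zero a (hΔx.1 (hY''Δx ha)))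
  intro n
  induction n with
  | zero =>
    intro B hB hcard _ hBspan _
    have hcardeq : Y''.card ≤ B.card := by omega
    have hBY : B = Y'' := Finset.eq_of_subset_of_card_le hB hcardeq
    rw [← hBY]
    exact hBspan
  | succ n ih =>
    intro B hB hcard hBconn hBspan hBw
    by_cases hBne : B = Y''
    · rw [← hBne]; exact hBspan
    -- find a new adjacent vertex
    obtain ⟨as, hasY, hasB, p, hp, hpv⟩ := exists_adjacent hconn hY0 hB hBne
    obtain ⟨μ, hμΛ, c, hc, hrep⟩ := hBw
    have hasΔx : as ∈ Δx := hY''Δx hasY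
    have hasΦ : as ∈ S.Φ := hΔx.1 hasΔx
    have has0 : as ≠ 0 := S.root_ne_zero as hasΦ
    -- μ = lam0 Δx - ∑ B
    have hμeq : μ = S.lam0 Δx - ∑ a ∈ B, c a • a := by
      rw [← hrep]; abel
    -- inner product of μ with as is positive
    have hinnμ : 0 < S.inn μ as := by
      have hexp : S.inn μ as = S.inn (S.lam0 Δx) as - ∑ a ∈ B, c a * S.inn a as := by
        rw [hμeq, S.inn_sub_left, S.inn_sum_left]
        congr 1
        exact Finset.sum_congr rfl fun a _ => S.inn_smul_left (c a) a as
      have hlamnn : 0 ≤ S.inn (S.lam0 Δx) as := S.lam0_inn_nonneg hΔx hasΔx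
      have hterm : ∀ a ∈ B, c a * S.inn a as ≤ 0 := fun a ha =>
        mul_nonpos_of_nonneg_of_nonpos (hc a ha).le
          (S.simple_inn_nonpos hΔx (hY''Δx (hB ha)) hasΔx (ne_of_mem_of_not_mem ha hasB))
      rcases hp with hpB | hpl
      · -- p ∈ B : strict negative term
        have hpB' : p ∈ B := Finset.mem_coe.mp hpB
        have hplt : c p * S.inn p as < 0 :=
          mul_neg_of_pos_of_neg (hc p hpB')
            (lt_of_le_of_ne
              (S.simple_inn_nonpos hΔx (hY''Δx (hB hpB')) hasΔx
                (ne_of_mem_of_not_mem hpB' hasB)) hpv)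
        have hrest : ∑ a ∈ B.erase p, c a * S.inn a as ≤ 0 :=
          Finset.sum_nonpos fun a ha => hterm a (Finset.mem_of_mem_erase ha)
        have hsum : ∑ a ∈ B, c a * S.inn a as < 0 := by
          rw [← Finset.add_sum_erase B _ hpB']
          linarith
        rw [hexp]; linarith
      · -- p = l0T : lam0 Δx pairs nonzero with as
        rw [Set.mem_singleton_iff] at hpl
        have h0 : S.inn (S.lam0 Δx) as ≠ 0 := by
          intro h
          exact hpv (by rw [hpl]; exact (hedge as hasΦ).mpr h)
        have hsum : ∑ a ∈ B, c a * S.inn a as ≤ 0 := Finset.sum_nonpos hterm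
        rw [hexp]
        have : 0 < S.inn (S.lam0 Δx) as := lt_of_le_of_ne hlamnn (Ne.symm h0)
        linarith
    set κ := 2 * S.inn μ as / S.inn as as with hκ
    have hκpos : 0 < κ := by
      rw [hκ]
      exact div_pos (by linarith) (S.inn_pos as has0)
    set μ' := S.toRootWeightData.refl as μ with hμ'
    have hμ'Λ : μ' ∈ S.Λ :=
      S.weight_weyl_invariant _ (S.refl_mem_weyl hasΦ) μ hμΛ
    have hμ'eq : μ' = μ - κ • as := by rw [hμ', refl_apply, hκ]
    have hsum_congr : ∑ a ∈ B, (if a = as then κ else c a) • a = ∑ a ∈ B, c a • a :=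
      Finset.sum_congr rfl (fun a ha => by rw [if_neg (ne_of_mem_of_not_mem ha hasB)])
    have hrep' : S.lam0 Δx - μ' = ∑ a ∈ insert as B, (if a = as then κ else c a) • a := by
      rw [Finset.sum_insert hasB, if_pos rfl, hsum_congr, hμ'eq, ← hrep]
      abel
    -- face argument: lam0 Δ - μ' vanishes at x, hence lies in span Y
    have hvdecomp : S.lam0 Δ - μ' = (S.lam0 Δ - S.lam0 Δx) + (S.lam0 Δx - μ') := by abel
    have hvx : (S.lam0 Δ - μ') x = 0 := by
      rw [hvdecomp, LinearMap.add_apply, eval_zero_of_mem_span hA hG1, hrep',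
        eval_sum_smul]
      rw [Finset.sum_eq_zero (fun a ha => ?_)]
      · norm_num
      · have haY'' : a ∈ Y'' := by
          rcases Finset.mem_insert.mp ha with h | h
          · rw [h]; exact hasY
          · exact hB h
        rw [hY''x a haY'', mul_zero]
    have hsupp : supp Δ (S.lam0 Δ - μ') ⊆ Y := by
      by_contra hcon
      have := hface2 μ' hμ'Λ hcon
      rw [hvx] at this
      exact lt_irrefl 0 this
    have hvspan : S.lam0 Δ - μ' ∈ Submodule.span ℝ (Y : Set D) := by
      obtain ⟨nn, hnn0, hnnrep⟩ := S.lam0_dominates Δ hΔ μ' hμ'Λ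
      exact mem_span_of_supp_subset ⟨nn, hnnrep⟩ hsupp
    -- extract as ∈ span Y
    have hκas : (κ • as : D) ∈ Submodule.span ℝ (Y : Set D) := by
      have hBsum : (∑ a ∈ B, c a • a : D) ∈ Submodule.span ℝ (Y : Set D) :=
        Submodule.sum_mem _ fun a ha => Submodule.smul_mem _ _ (hBspan a ha)
      have heq : (κ • as : D) = (S.lam0 Δ - μ') - (S.lam0 Δ - S.lam0 Δx)
          - ∑ a ∈ B, c a • a := by
        have h1 : S.lam0 Δx - μ' = κ • as + ∑ a ∈ B, c a • a := by
          rw [hμ'eq, ← hrep]; abel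
        rw [show (S.lam0 Δ - μ') - (S.lam0 Δ - S.lam0 Δx) = S.lam0 Δx - μ' from by abel, h1]
        abel
      rw [heq]
      exact Submodule.sub_mem _ (Submodule.sub_mem _ hvspan hG1) hBsum
    have hasspan : (as : D) ∈ Submodule.span ℝ (Y : Set D) :=
      (Submodule.smul_mem_iff _ (ne_of_gt hκpos)).mp hκas
    -- recurse with B' = insert as B
    have hB' : insert as B ⊆ Y'' := Finset.insert_subset hasY hB
    have hcard' : Y''.card - (insert as B).card ≤ n := by
      rw [Finset.card_insert_of_notMem hasB]
      have : B.card < Y''.card := Finset.card_lt_card ⟨hB, fun h => hBne (Finset.Subset.antisymm hB h)⟩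
      omega
    have hconn' : GraphConnected S.inn ((↑(insert as B) : Set D) ∪ {l0T}) := by
      have h2 := graphConnected_insert S.inn_symm hBconn hp hpv
      have hseteq : ((↑B : Set D) ∪ {l0T}) ∪ {as} = (↑(insert as B) : Set D) ∪ {l0T} := by
        rw [Finset.coe_insert]
        ext z
        simp only [Set.mem_union, Set.mem_singleton_iff, Set.mem_insert_iff, Finset.mem_coe]
        tauto
      rwa [hseteq] at h2
    have hBspan' : ∀ a ∈ insert as B, (a : D) ∈ Submodule.span ℝ (Y : Set D) := by
      intro a ha
      rcases Finset.mem_insert.mp ha with h | h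
      · rw [h]; exact hasspan
      · exact hBspan a h
    have hBw' : ∃ μ ∈ S.Λ, ∃ c : D → ℝ, (∀ a ∈ insert as B, 0 < c a) ∧
        S.lam0 Δx - μ = ∑ a ∈ insert as B, c a • a := by
      refine ⟨μ', hμ'Λ, fun a => if a = as then κ else c a, ?_, hrep'⟩
      intro a ha
      show 0 < if a = as then κ else c a
      rcases Finset.mem_insert.mp ha with h | h
      · rw [if_pos h]; exact hκpos
      · rw [if_neg (ne_of_mem_of_not_mem h hasB)]; exact hc a h
    exact ih (insert as B) hB' hcard' hconn' hBspan' hBw'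

lemma grow {Δ Δx Y : Finset D} {x : A}
    (hΔ : S.toRootWeightData.IsBase Δ) (hΔx : S.toRootWeightData.IsBase Δx)
    (hA : ∀ a ∈ Y, a x = 0)
    (hface2 : ∀ l ∈ S.Λ, ¬ supp Δ (S.lam0 Δ - l) ⊆ Y → 0 < (S.lam0 Δ - l) x)
    (hG1 : S.lam0 Δ - S.lam0 Δx ∈ Submodule.span ℝ (Y : Set D))
    {l0T : D} (hedge : ∀ a ∈ S.Φ, S.inn l0T a = 0 ↔ S.inn (S.lam0 Δx) a = 0)
    {Y'' : Finset D} (hY''Δx : Y'' ⊆ Δx) (hY''x : ∀ a ∈ Y'', a x = 0)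
    (hconn : GraphConnected S.inn ((↑Y'' : Set D) ∪ {l0T})) :
    ∀ a ∈ Y'', (a : D) ∈ Submodule.span ℝ (Y : Set D) := by
  refine S.grow_aux hΔ hΔx hA hface2 hG1 hedge hY''Δx hY''x hconn Y''.card ∅
    (Finset.empty_subset _) (by simp) ?_ (by simp) ?_
  · have hseteq : ((↑(∅ : Finset D) : Set D) ∪ {l0T}) = ({l0T} : Set D) := by
      simp
    rw [hseteq]
    exact graphConnected_singleton l0T
  · exact ⟨S.lam0 Δx, S.lam0_mem Δx hΔx, fun _ => 1, fun a ha => absurd ha (Finset.notMem_empty a), by simp⟩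

end RootWeightSystem

end AuxLemmas6


section AuxLemmas7
set_option linter.unusedSectionVars false
set_option maxHeartbeats 1000000

variable {A : Type*} [NormedAddCommGroup A] [NormedSpace ℝ A] [FiniteDimensional ℝ A]

local notation "D" => Module.Dual ℝ A

lemma face_subset_face {S T : RootWeightSystem A} (hΦ : S.Φ = T.Φ) (hinn : S.inn = T.inn)
    (hsameAll : ∀ Δ₁, S.toRootWeightData.IsBase Δ₁ → SamePattern S T Δ₁)
    {Δ Y : Finset D} (hΔ : S.toRootWeightData.IsBase Δ) (hYΔ : Y ⊆ Δ) :
    S.Face Δ Y ⊆ T.Face Δ Y := by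
  intro x hx
  obtain ⟨hA, hpos⟩ := hx
  have hTΔ : T.toRootWeightData.IsBase Δ := (isBase_iff_of_phi_eq hΦ Δ).mp hΔ
  -- a Δ-regular direction
  obtain ⟨u, hu⟩ := exists_dominant_point hΔ.2.1
  have hu1 : ∀ a ∈ Δ, 0 < a u := fun a ha => by rw [hu a ha]; exact one_pos
  have hureg : ∀ c ∈ S.Φ, c u ≠ 0 := fun c hc => (S.pos_iff_eval hΔ hu1 hc).1
  -- perturbed point
  obtain ⟨t, ht0, htp⟩ := exists_perturb S.Φ x u
  set x' := x + t • u with hx'def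
  have hreg : ∀ c ∈ S.Φ, c x' ≠ 0 := by
    intro c hc
    rcases lt_trichotomy (c x) 0 with h | h | h
    · exact ne_of_lt ((htp c hc).2.1 h)
    · rw [(htp c hc).2.2, h, zero_add]
      exact mul_ne_zero (ne_of_gt ht0) (hureg c hc)
    · exact ne_of_gt ((htp c hc).1 h)
  have hsign : ∀ b ∈ S.Φ, b x' < 0 → b x ≤ 0 := by
    intro b hb hbx'
    by_contra hp'
    push_neg at hp'
    exact absurd ((htp b hb).1 hp') (not_lt.mpr hbx'.le)
  -- run the chamber-chasing algorithm
  obtain ⟨Δx, hchain, hΔx, hposx'⟩ := S.exists_chain hreg (S.Nset x' Δ).card Δ le_rfl hΔ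
  -- the invariant along the chain
  have hQ : ∀ Δ₂, Relation.ReflTransGen (S.StepRel x') Δ Δ₂ →
      S.toRootWeightData.IsBase Δ₂ ∧
      (S.lam0 Δ - S.lam0 Δ₂) ∈ Submodule.span ℝ (Y : Set D) ∧
      (T.lam0 Δ - T.lam0 Δ₂) ∈ Submodule.span ℝ (Y : Set D) := by
    intro Δ₂ hch
    induction hch with
    | refl => exact ⟨hΔ, by simp, by simp⟩
    | @tail Δa Δb hab hbstep ih =>
      obtain ⟨hbaseA, hQS, hQT⟩ := ih
      obtain ⟨b, hbΔa, hbx, rfl⟩ := hbstep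
      have hbΦ : b ∈ S.Φ := hbaseA.1 hbΔa
      have hbaseB := S.base_refl hbaseA hbΦ
      have hTbaseA : T.toRootWeightData.IsBase Δa := (isBase_iff_of_phi_eq hΦ Δa).mp hbaseA
      have hSlam : S.lam0 (Δa.image (S.toRootWeightData.refl b))
          = S.toRootWeightData.refl b (S.lam0 Δa) := S.lam0_refl hbaseA hbΦ
      have hTlam : T.lam0 (Δa.image (S.toRootWeightData.refl b))
          = S.toRootWeightData.refl b (T.lam0 Δa) := by
        rw [refl_eq_of_inn_eq hinn b]
        exact T.lam0_refl hTbaseA (hΦ ▸ hbΦ)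
      set cS := 2 * S.inn (S.lam0 Δa) b / S.inn b b with hcSdef
      set cT := 2 * S.inn (T.lam0 Δa) b / S.inn b b with hcTdef
      have hSstep : S.lam0 Δa - S.lam0 (Δa.image (S.toRootWeightData.refl b)) = cS • b := by
        rw [hSlam, RootWeightSystem.refl_apply]
        abel
      have hTstep : T.lam0 Δa - T.lam0 (Δa.image (S.toRootWeightData.refl b)) = cT • b := by
        rw [hTlam, RootWeightSystem.refl_apply]
        abel
      have hkey : (cS • b : D) ∈ Submodule.span ℝ (Y : Set D) ∧
          (cT • b : D) ∈ Submodule.span ℝ (Y : Set D) := by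
        by_cases hcS : S.inn (S.lam0 Δa) b = 0
        · have hcS0 : cS = 0 := by rw [hcSdef, hcS]; ring
          have hcT : S.inn (T.lam0 Δa) b = 0 := ((hsameAll Δa hbaseA) b hbΦ).2.mp hcS
          have hcT0 : cT = 0 := by rw [hcTdef, hcT]; ring
          rw [hcS0, hcT0, zero_smul]
          exact ⟨Submodule.zero_mem _, Submodule.zero_mem _⟩
        · have hcSpos : 0 < cS := by
            rw [hcSdef]
            refine div_pos ?_ (S.inn_pos b (S.root_ne_zero b hbΦ))
            have := lt_of_le_of_ne (S.lam0_inn_nonneg hbaseA hbΔa) (Ne.symm hcS)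
            linarith
          have hlΛ : S.lam0 (Δa.image (S.toRootWeightData.refl b)) ∈ S.Λ :=
            S.lam0_mem _ hbaseB
          have hbx0 : b x ≤ 0 := hsign b hbΦ hbx
          have hdec : S.lam0 Δ - S.lam0 (Δa.image (S.toRootWeightData.refl b))
              = (S.lam0 Δ - S.lam0 Δa) + cS • b := by
            rw [← hSstep]; abel
          have hval : (S.lam0 Δ - S.lam0 (Δa.image (S.toRootWeightData.refl b))) x ≤ 0 := by
            rw [hdec, LinearMap.add_apply, eval_zero_of_mem_span hA hQS, zero_add,
              LinearMap.smul_apply, smul_eq_mul]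
            exact mul_nonpos_of_nonneg_of_nonpos hcSpos.le hbx0
          have hsupp : supp Δ (S.lam0 Δ - S.lam0 (Δa.image (S.toRootWeightData.refl b))) ⊆ Y := by
            by_contra hcon
            exact absurd (hpos _ hlΛ hcon) (not_lt.mpr hval)
          have hspan1 : S.lam0 Δ - S.lam0 (Δa.image (S.toRootWeightData.refl b))
              ∈ Submodule.span ℝ (Y : Set D) := by
            obtain ⟨nn, _, hnnrep⟩ := S.lam0_dominates Δ hΔ _ hlΛ
            exact mem_span_of_supp_subset ⟨nn, hnnrep⟩ hsupp
          have hcSb : (cS • b : D) ∈ Submodule.span ℝ (Y : Set D) := by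
            have heq2 : (cS • b : D)
                = (S.lam0 Δ - S.lam0 (Δa.image (S.toRootWeightData.refl b)))
                  - (S.lam0 Δ - S.lam0 Δa) := by
              rw [hdec]; abel
            rw [heq2]
            exact Submodule.sub_mem _ hspan1 hQS
          have hbspan : (b : D) ∈ Submodule.span ℝ (Y : Set D) :=
            (Submodule.smul_mem_iff _ (ne_of_gt hcSpos)).mp hcSb
          exact ⟨hcSb, Submodule.smul_mem _ cT hbspan⟩
      refine ⟨hbaseB, ?_, ?_⟩
      · rw [show S.lam0 Δ - S.lam0 (Δa.image (S.toRootWeightData.refl b))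
            = (S.lam0 Δ - S.lam0 Δa) + cS • b from by rw [← hSstep]; abel]
        exact Submodule.add_mem _ hQS hkey.1
      · rw [show T.lam0 Δ - T.lam0 (Δa.image (S.toRootWeightData.refl b))
            = (T.lam0 Δ - T.lam0 Δa) + cT • b from by rw [← hTstep]; abel]
        exact Submodule.add_mem _ hQT hkey.2
  obtain ⟨-, hG1S, hG1T⟩ := hQ Δx hchain
  -- x is nonnegative on Δx
  have hxge : ∀ a ∈ Δx, 0 ≤ a x := by
    intro a ha
    by_contra h
    push_neg at h
    exact absurd ((htp a (hΔx.1 ha)).2.1 h) (not_lt.mpr (hposx' a ha).le)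
  -- prove T-face membership
  refine ⟨hA, ?_⟩
  intro l hl hsuppT
  have hTΔx : T.toRootWeightData.IsBase Δx := (isBase_iff_of_phi_eq hΦ Δx).mp hΔx
  obtain ⟨m, hm0, hmrep⟩ := T.lam0_dominates Δx hTΔx l hl
  have hval2 : 0 ≤ (T.lam0 Δx - l) x := by
    rw [hmrep, eval_sum_smul]
    exact Finset.sum_nonneg fun a ha => mul_nonneg (hm0 a ha) (hxge a ha)
  have hdec : T.lam0 Δ - l = (T.lam0 Δ - T.lam0 Δx) + (T.lam0 Δx - l) := by abel
  have hval1 : (T.lam0 Δ - T.lam0 Δx) x = 0 := eval_zero_of_mem_span hA hG1T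
  rcases eq_or_lt_of_le hval2 with heq | hlt
  · -- boundary case: derive a contradiction with hsuppT
    exfalso
    have hsum0 : ∑ a ∈ Δx, m a * a x = 0 := by
      have h5 : (T.lam0 Δx - l) x = 0 := heq.symm
      rw [hmrep, eval_sum_smul] at h5
      exact h5
    have hterms : ∀ a ∈ Δx, m a * a x = 0 :=
      (Finset.sum_eq_zero_iff_of_nonneg
        (fun a ha => mul_nonneg (hm0 a ha) (hxge a ha))).mp hsum0
    set Y'' := supp Δx (T.lam0 Δx - l) with hY''def
    have hY''sub : Y'' ⊆ Δx := Finset.filter_subset _ _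
    have hcoef : ∀ a ∈ Δx, coeffs Δx (T.lam0 Δx - l) a = m a := coeffs_eq hΔx.2.1 hmrep
    have hY''x : ∀ a ∈ Y'', a x = 0 := by
      intro a ha
      have haΔx : a ∈ Δx := hY''sub ha
      have hane : coeffs Δx (T.lam0 Δx - l) a ≠ 0 := (Finset.mem_filter.mp ha).2
      rw [hcoef a haΔx] at hane
      rcases mul_eq_zero.mp (hterms a haΔx) with h | h
      · exact absurd h hane
      · exact h
    have hadm : T.toRootWeightData.Admissible Δx Y'' :=
      (T.admissible_iff_support Δx hTΔx Y'' hY''sub).mpr ⟨l, hl, rfl⟩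
    have hconn : GraphConnected S.inn ((↑Y'' : Set D) ∪ {T.lam0 Δx}) := by
      have := hadm.2
      rwa [← hinn] at this
    have hedge : ∀ a ∈ S.Φ, S.inn (T.lam0 Δx) a = 0 ↔ S.inn (S.lam0 Δx) a = 0 :=
      fun a ha => ((hsameAll Δx hΔx) a ha).2.symm
    have hspanY'' := S.grow hΔ hΔx hA hpos hG1S hedge hY''sub hY''x hconn
    have h2 : T.lam0 Δx - l ∈ Submodule.span ℝ (Y'' : Set D) :=
      mem_span_of_supp_subset ⟨m, hmrep⟩ (by rw [← hY''def])
    have h1 : T.lam0 Δx - l ∈ Submodule.span ℝ (Y : Set D) := by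
      have hle : Submodule.span ℝ (Y'' : Set D) ≤ Submodule.span ℝ (Y : Set D) := by
        rw [Submodule.span_le]
        intro z hz
        exact hspanY'' z (Finset.mem_coe.mp hz)
      exact hle h2
    have h3 : T.lam0 Δ - l ∈ Submodule.span ℝ (Y : Set D) := by
      rw [hdec]
      exact Submodule.add_mem _ hG1T h1
    exact hsuppT (supp_subset_of_mem_span hΔ.2.1 hYΔ h3)
  · rw [hdec, LinearMap.add_apply, hval1, zero_add]
    exact hlt

end AuxLemmas7


/-- Suppose the highest weights of `ρ` and `σ` lie in the same
face of the hyperplane arrangement `{H_a}_{a ∈ Φ}` of `A*` (i.e. have the same sign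
pattern against all roots).  Then for bases `Δ`, `Δ'` and admissible subsets
`Y ⊆ Δ`, `Y' ⊆ Δ'`, one has `F_Y^Δ(ρ) = F_{Y'}^{Δ'}(ρ)` iff
`F_Y^Δ(σ) = F_{Y'}^{Δ'}(σ)`. -/
theorem face_eq_iff_face_eq_of_same_face (S T : RootWeightSystem A)
    (hΦ : S.Φ = T.Φ) (hinn : S.inn = T.inn)
    (Δref : Finset (Module.Dual ℝ A)) (hΔref : S.toRootWeightData.IsBase Δref)
    (hsame : ∀ a ∈ S.Φ, (0 < S.inn (S.lam0 Δref) a ↔ 0 < S.inn (T.lam0 Δref) a) ∧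
      (S.inn (S.lam0 Δref) a = 0 ↔ S.inn (T.lam0 Δref) a = 0))
    (Δ Δ' Y Y' : Finset (Module.Dual ℝ A))
    (hΔ : S.toRootWeightData.IsBase Δ) (hΔ' : S.toRootWeightData.IsBase Δ')
    (hY : S.toRootWeightData.Admissible Δ Y)
    (hY' : S.toRootWeightData.Admissible Δ' Y') :
    S.Face Δ Y = S.Face Δ' Y' ↔ T.Face Δ Y = T.Face Δ' Y' := by
  have hall : ∀ Δ₁, S.toRootWeightData.IsBase Δ₁ → SamePattern S T Δ₁ :=
    samePattern_all hΦ hinn hΔref hsame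
  have hallT : ∀ Δ₁, T.toRootWeightData.IsBase Δ₁ → SamePattern T S Δ₁ := by
    intro Δ₁ h1
    exact samePattern_symm hΦ hinn (hall Δ₁ ((isBase_iff_of_phi_eq hΦ Δ₁).mpr h1))
  have e1 : S.Face Δ Y = T.Face Δ Y :=
    Set.Subset.antisymm (face_subset_face hΦ hinn hall hΔ hY.1)
      (face_subset_face hΦ.symm hinn.symm hallT ((isBase_iff_of_phi_eq hΦ Δ).mp hΔ) hY.1)
  have e2 : S.Face Δ' Y' = T.Face Δ' Y' :=
    Set.Subset.antisymm (face_subset_face hΦ hinn hall hΔ' hY'.1)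
      (face_subset_face hΦ.symm hinn.symm hallT ((isBase_iff_of_phi_eq hΦ Δ').mp hΔ') hY'.1)
  rw [e1, e2]
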